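/- Let p, n, k be positive integers with p ≥ 2, let S ⊆ {1,…,p} with |S| = k. Let L : ℝ^p → ℝ be differentiable and satisfy the (α,τ)-RSC condition with parameters α₁, α₂ > 0 and τ₁, τ₂ ≥ 0, and let ρ : ℝ → ℝ be μ-amenable with 0 ≤ μ < α₁; set q(t) := λ|t| − ρ(t), ρ(β) := Σ_{j=1}^p ρ(β_j), ∇q(β) := (q'(β_j))_{j=1}^p. Suppose β̂ ∈ ℝ^p satisfies supp(β̂) ⊆ S, ‖β̂‖₁ ≤ R, and ∇L(β̂) − ∇q(β̂) + λẑ = 0 for some ẑ ∈ ℝ^p with ẑ_S ∈ ∂‖β̂_S‖₁ and max_{j ∉ S}|ẑ_j| ≤ 1 − δ, where δ ∈ (0,1]. Suppose further that λ ≤ α₂/(8R), n ≥ (16R²τ₂²/α₂²) log p, λ ≥ 4Rτ₁ log p/(δn), and n ≥ (2τ₁/(α₁ − μ)) · (4/δ + 2)² · k log p. Then every stationary point β̃ of the program min_{‖β‖₁ ≤ R} {L(β) + ρ(β)} satisfies supp(β̃) ⊆ S. -/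

import Mathlib

open scoped BigOperators

/-- A function `ρ : ℝ → ℝ` is `μ`-amenable (with selection parameter `lam > 0`):
(i) symmetric around zero with `ρ 0 = 0`; (ii) nondecreasing on `[0, ∞)`;
(iii) `t ↦ ρ t / t` nonincreasing on `(0, ∞)`; (iv) differentiable away from `0`;
(v) `t ↦ ρ t + μ/2 t²` convex; (vi) `ρ'(t) → lam` as `t → 0⁺`. -/
structure Amenable (lam mu : ℝ) (ρ : ℝ → ℝ) : Prop where
  symm : ∀ t : ℝ, ρ (-t) = ρ t
  zero : ρ 0 = 0
  mono : MonotoneOn ρ (Set.Ici (0 : ℝ))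
  ratio : AntitoneOn (fun t => ρ t / t) (Set.Ioi (0 : ℝ))
  diff : ∀ t : ℝ, t ≠ 0 → DifferentiableAt ℝ ρ t
  conv : ConvexOn ℝ Set.univ (fun t => ρ t + mu / 2 * t ^ 2)
  deriv_lim : Filter.Tendsto (deriv ρ) (nhdsWithin 0 (Set.Ioi 0)) (nhds lam)


open scoped RealInnerProductSpace

/-- The ℓ₁-norm on `ℝ^p`. -/
noncomputable def norm1 {p : ℕ} (x : EuclideanSpace ℝ (Fin p)) : ℝ := ∑ j, |x j|

/-- The ℓ_∞-norm on `ℝ^p`. -/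
noncomputable def normInf {p : ℕ} (x : EuclideanSpace ℝ (Fin p)) : ℝ := ⨆ j, |x j|

/-- The subdifferential of the ℓ₁-norm at `x`: vectors `v` with `‖v‖_∞ ≤ 1` and
`⟨v, x⟩ = ‖x‖₁`. -/
def l1Subdiff {m : Type*} [Fintype m] (x : m → ℝ) : Set (m → ℝ) :=
  {v | (∀ j, |v j| ≤ 1) ∧ ∑ j, v j * x j = ∑ j, |x j|}

/-- The `(α, τ)`-RSC condition for a loss `L` with parameters `α₁, α₂, τ₁, τ₂` (and `n`, `p`). -/
def RSCCond (p n : ℕ) (α₁ α₂ τ₁ τ₂ : ℝ) (L : EuclideanSpace ℝ (Fin p) → ℝ) : Prop :=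
  ∀ β Δ : EuclideanSpace ℝ (Fin p),
    (‖Δ‖ ≤ 1 → α₁ * ‖Δ‖ ^ 2 - τ₁ * (Real.log p / n) * (norm1 Δ) ^ 2 ≤
      ⟪gradient L (β + Δ) - gradient L β, Δ⟫) ∧
    (1 ≤ ‖Δ‖ → α₂ * ‖Δ‖ - τ₂ * Real.sqrt (Real.log p / n) * norm1 Δ ≤
      ⟪gradient L (β + Δ) - gradient L β, Δ⟫)

/-- The derivative of `q(t) = λ|t| − ρ(t)`. -/
noncomputable def qDeriv (lam : ℝ) (ρ : ℝ → ℝ) (t : ℝ) : ℝ :=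
  deriv (fun u => lam * |u| - ρ u) t

/-- `βt` is a stationary point of the program `min_{‖β‖₁ ≤ R} L β + Σⱼ ρ(βⱼ)`:
`‖βt‖₁ ≤ R` and there is `z ∈ ∂‖βt‖₁` with
`⟨∇L(βt) − ∇q(βt) + λ z, β − βt⟩ ≥ 0` for all feasible `β`. -/
def IsStationaryPt {p : ℕ} (L : EuclideanSpace ℝ (Fin p) → ℝ) (ρ : ℝ → ℝ) (lam R : ℝ)
    (βt : EuclideanSpace ℝ (Fin p)) : Prop :=
  norm1 βt ≤ R ∧ ∃ z : Fin p → ℝ, z ∈ l1Subdiff (fun j => βt j) ∧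
    ∀ β : EuclideanSpace ℝ (Fin p), norm1 β ≤ R →
      0 ≤ ∑ j, (gradient L βt j - qDeriv lam ρ (βt j) + lam * z j) * (β j - βt j)

open Filter Set

section Aux
variable {lam mu : ℝ} {ρ : ℝ → ℝ}

lemma Amenable.cont (hρ : Amenable lam mu ρ) : Continuous ρ := by
  have hg : Continuous (fun t : ℝ => ρ t + mu / 2 * t ^ 2) := by
    rw [← continuousOn_univ]
    exact hρ.conv.continuousOn isOpen_univ
  have : ρ = fun t : ℝ => (ρ t + mu / 2 * t ^ 2) - mu / 2 * t ^ 2 := by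
    funext t; ring
  rw [this]
  exact hg.sub (continuous_const.mul (continuous_pow 2))

-- monotonicity of deriv ρ + mu * t on (0,∞)
lemma Amenable.key1 (hρ : Amenable lam mu ρ) {a b : ℝ} (hb : 0 < b) (hba : b ≤ a) :
    deriv ρ b + mu * b ≤ deriv ρ a + mu * a := by
  have ha : 0 < a := lt_of_lt_of_le hb hba
  set g : ℝ → ℝ := fun t => ρ t + mu / 2 * t ^ 2 with hg
  have hconv : ConvexOn ℝ (Ioi (0:ℝ)) g := hρ.conv.subset (subset_univ _) (convex_Ioi 0)
  have hdiff : ∀ x ∈ Ioi (0:ℝ), DifferentiableAt ℝ g x := by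
    intro x hx
    exact ((hρ.diff x (ne_of_gt hx)).add (by fun_prop))
  have hmono := hconv.monotoneOn_deriv hdiff
  have hderiv : ∀ x : ℝ, x ≠ 0 → deriv g x = deriv ρ x + mu * x := by
    intro x hx
    have h1 := (hρ.diff x hx).hasDerivAt.add ((hasDerivAt_pow 2 x).const_mul (mu / 2))
    rw [show deriv g x = deriv (ρ + fun y => mu / 2 * y ^ 2) x from rfl, h1.deriv]; push_cast; ring
  have h := hmono (show b ∈ Ioi (0:ℝ) from hb) (show a ∈ Ioi (0:ℝ) from ha) hba
  rw [hderiv b (ne_of_gt hb), hderiv a (ne_of_gt ha)] at h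
  exact h

-- lam ≤ deriv ρ a + mu * a for a > 0
lemma Amenable.key2 (hρ : Amenable lam mu ρ) (hmu : 0 ≤ mu) {a : ℝ} (ha : 0 < a) :
    lam ≤ deriv ρ a + mu * a := by
  have hev : ∀ᶠ t in nhdsWithin 0 (Ioi (0:ℝ)), deriv ρ t ≤ deriv ρ a + mu * a := by
    filter_upwards [Ioo_mem_nhdsGT_of_mem (show (0:ℝ) ∈ Ico 0 a from ⟨le_refl _, ha⟩)]
      with t ht
    have := hρ.key1 ht.1 ht.2.le
    nlinarith [mul_nonneg hmu ht.1.le]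
  exact le_of_tendsto hρ.deriv_lim hev

-- deriv ρ t ≤ ρ t / t for t > 0
lemma Amenable.key3 (hρ : Amenable lam mu ρ) {t : ℝ} (ht : 0 < t) :
    deriv ρ t ≤ ρ t / t := by
  have hd := (hρ.diff t (ne_of_gt ht)).hasDerivAt
  have htend : Tendsto (slope ρ t) (nhdsWithin t (Ioi t)) (nhds (deriv ρ t)) := by
    have := hasDerivAt_iff_tendsto_slope.mp hd
    rw [hd.deriv]
    exact this.mono_left (nhdsWithin_mono _ (fun x hx => ne_of_gt hx))
  refine le_of_tendsto htend ?_
  filter_upwards [self_mem_nhdsWithin] with s hs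
  have hst : t < s := hs
  have hratio := hρ.ratio (show t ∈ Ioi (0:ℝ) from ht) (show s ∈ Ioi (0:ℝ) from ht.trans hst)
    hst.le
  rw [slope_def_field]
  -- (ρ s - ρ t)/(s - t) ≤ ρ t / t
  rw [div_le_div_iff₀ (by linarith) ht]
  have h1 : ρ s * t ≤ ρ t * s := by
    have := (div_le_div_iff₀ (ht.trans hst) ht).mp hratio
    linarith
  nlinarith [h1]

-- ρ t / t ≤ lam for t > 0
lemma Amenable.key4 (hρ : Amenable lam mu ρ) (hmu : 0 ≤ mu) {t : ℝ} (ht : 0 < t) :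
    ρ t / t ≤ lam := by
  by_contra hgt
  push_neg at hgt
  have hev : ∀ᶠ x in nhdsWithin 0 (Ioi (0:ℝ)), deriv ρ x < ρ t / t :=
    hρ.deriv_lim.eventually (eventually_lt_nhds hgt)
  rw [eventually_iff, mem_nhdsGT_iff_exists_Ioo_subset] at hev
  obtain ⟨η, hη, hsub⟩ := hev
  have hη0 : 0 < η := hη
  set u := min t η / 2 with hu
  have hu0 : 0 < u := by positivity
  have hut : u < t := by
    have : min t η ≤ t := min_le_left _ _
    simp only [hu]; linarith
  have huη : u < η := by
    have : min t η ≤ η := min_le_right _ _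
    simp only [hu]; linarith
  obtain ⟨ξ, hξ, hξeq⟩ := exists_hasDerivAt_eq_slope ρ (deriv ρ) hu0
    (hρ.cont.continuousOn)
    (fun x hx => (hρ.diff x (ne_of_gt hx.1)).hasDerivAt)
  have hξmem : ξ ∈ Ioo (0:ℝ) η := ⟨hξ.1, hξ.2.trans huη⟩
  have hlt := hsub hξmem
  simp only [mem_setOf_eq] at hlt
  have hratio := hρ.ratio (show u ∈ Ioi (0:ℝ) from hu0) (show t ∈ Ioi (0:ℝ) from ht) hut.le
  rw [hρ.zero] at hξeq
  have : ρ t / t ≤ ρ u / u := hratio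
  rw [show ρ u / u = (ρ u - 0) / (u - 0) by ring_nf] at this
  rw [← hξeq] at this
  exact absurd (this.trans_lt hlt) (lt_irrefl _)

-- 0 ≤ deriv ρ t for t > 0
lemma Amenable.key5 (hρ : Amenable lam mu ρ) {t : ℝ} (ht : 0 < t) :
    0 ≤ deriv ρ t := by
  have hd := (hρ.diff t (ne_of_gt ht)).hasDerivAt
  have htend : Tendsto (slope ρ t) (nhdsWithin t (Ioi t)) (nhds (deriv ρ t)) := by
    have := hasDerivAt_iff_tendsto_slope.mp hd
    rw [hd.deriv]
    exact this.mono_left (nhdsWithin_mono _ (fun x hx => ne_of_gt hx))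
  refine ge_of_tendsto htend ?_
  filter_upwards [self_mem_nhdsWithin] with s hs
  have hst : t < s := hs
  rw [slope_def_field]
  apply div_nonneg _ (by linarith)
  have := hρ.mono (show t ∈ Ici (0:ℝ) from ht.le) (show s ∈ Ici (0:ℝ) from (ht.trans hst).le)
    hst.le
  linarith

lemma Amenable.qd_pos (hρ : Amenable lam mu ρ) {t : ℝ} (ht : 0 < t) :
    qDeriv lam ρ t = lam - deriv ρ t := by
  have h1 : HasDerivAt (fun u : ℝ => lam * |u| - ρ u) (lam * 1 - deriv ρ t) t :=
    ((hasDerivAt_abs_pos ht).const_mul lam).sub (hρ.diff t (ne_of_gt ht)).hasDerivAt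
  rw [qDeriv, h1.deriv]; ring

lemma Amenable.qd_neg_eq (hρ : Amenable lam mu ρ) (t : ℝ) :
    qDeriv lam ρ (-t) = - qDeriv lam ρ t := by
  set f : ℝ → ℝ := fun u => lam * |u| - ρ u with hf
  have heven : (fun x => f (-x)) = f := by
    funext x; simp only [hf, abs_neg, hρ.symm]
  have h := deriv_comp_neg (f := f) (x := t)
  rw [heven] at h
  rw [qDeriv, qDeriv, ← hf]
  linarith [h]

lemma Amenable.qd_zero (hρ : Amenable lam mu ρ) : qDeriv lam ρ 0 = 0 := by
  have := hρ.qd_neg_eq 0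
  simp only [neg_zero] at this
  linarith

lemma Amenable.qd_bounds (hρ : Amenable lam mu ρ) (hmu : 0 ≤ mu) {t : ℝ} (ht : 0 < t) :
    0 ≤ qDeriv lam ρ t ∧ qDeriv lam ρ t ≤ lam := by
  rw [hρ.qd_pos ht]
  constructor
  · have := (hρ.key3 ht).trans (hρ.key4 hmu ht); linarith
  · have := hρ.key5 ht; linarith

lemma Amenable.qd_abs (hρ : Amenable lam mu ρ) (hmu : 0 ≤ mu) (hlam : 0 ≤ lam) (t : ℝ) :
    |qDeriv lam ρ t| ≤ lam := by
  rcases lt_trichotomy t 0 with h | h | h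
  · have h2 := hρ.qd_bounds hmu (show 0 < -t by linarith)
    have h3 := hρ.qd_neg_eq (-t)
    rw [neg_neg] at h3
    rw [abs_le]; constructor <;> [skip; skip] <;> rw [h3] <;> linarith [h2.1, h2.2]
  · rw [h, hρ.qd_zero]; simpa using hlam
  · have h2 := hρ.qd_bounds hmu h
    rw [abs_le]; constructor <;> linarith [h2.1, h2.2]

lemma Amenable.qd_smooth_le (hρ : Amenable lam mu ρ) (hmu : 0 ≤ mu) {a b : ℝ} (hba : b ≤ a) :
    qDeriv lam ρ a - qDeriv lam ρ b ≤ mu * (a - b) := by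
  rcases lt_trichotomy b 0 with hb | hb | hb
  · -- b < 0
    have hqb : qDeriv lam ρ b = deriv ρ (-b) - lam := by
      have h3 := hρ.qd_neg_eq (-b); rw [neg_neg] at h3
      rw [h3, hρ.qd_pos (show 0 < -b by linarith)]; ring
    rcases lt_trichotomy a 0 with ha | ha | ha
    · have hqa : qDeriv lam ρ a = deriv ρ (-a) - lam := by
        have h3 := hρ.qd_neg_eq (-a); rw [neg_neg] at h3
        rw [h3, hρ.qd_pos (show 0 < -a by linarith)]; ring
      have := hρ.key1 (show 0 < -a by linarith) (show -a ≤ -b by linarith)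
      rw [hqa, hqb]; linarith
    · rw [ha, hρ.qd_zero, hqb]
      have := hρ.key2 hmu (show 0 < -b by linarith)
      linarith
    · rw [hρ.qd_pos ha, hqb]
      have h1 := hρ.key2 hmu ha
      have h2 := hρ.key2 hmu (show 0 < -b by linarith)
      linarith
  · -- b = 0
    subst hb
    rw [hρ.qd_zero]
    rcases eq_or_lt_of_le hba with h | ha
    · rw [← h, hρ.qd_zero]; simp
    · rw [hρ.qd_pos ha]
      have := hρ.key2 hmu ha
      linarith
  · -- 0 < b
    have ha : 0 < a := lt_of_lt_of_le hb hba
    rw [hρ.qd_pos ha, hρ.qd_pos hb]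
    have := hρ.key1 hb hba
    linarith

lemma Amenable.qd_smooth (hρ : Amenable lam mu ρ) (hmu : 0 ≤ mu) (a b : ℝ) :
    (qDeriv lam ρ a - qDeriv lam ρ b) * (a - b) ≤ mu * (a - b) ^ 2 := by
  rcases le_total b a with h | h
  · have h1 := hρ.qd_smooth_le hmu h
    nlinarith [h1, sub_nonneg.mpr h]
  · have h1 := hρ.qd_smooth_le hmu h
    nlinarith [h1, sub_nonneg.mpr h]

end Aux

set_option maxHeartbeats 2000000 in
/-- Lemma on stationary points: under the RSC condition, `μ`-amenability, the
zero-subgradient condition for `β̂` supported on `S` with strict dual feasibility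
`max_{j ∉ S} |ẑⱼ| ≤ 1 − δ`, and the stated conditions on `λ, n`, every stationary point `β̃`
of `min_{‖β‖₁ ≤ R} {L β + Σⱼ ρ(βⱼ)}` is supported on `S`. -/
theorem stationary_points_supported (p n k : ℕ) (hp : 2 ≤ p) (hn : 0 < n) (hk : 0 < k)
    (S : Finset (Fin p)) (hS : S.card = k)
    (L : EuclideanSpace ℝ (Fin p) → ℝ) (hL : Differentiable ℝ L)
    (α₁ α₂ τ₁ τ₂ : ℝ) (hα₁ : 0 < α₁) (hα₂ : 0 < α₂) (hτ₁ : 0 ≤ τ₁) (hτ₂ : 0 ≤ τ₂)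
    (hRSC : RSCCond p n α₁ α₂ τ₁ τ₂ L)
    (ρ : ℝ → ℝ) (lam mu R δ : ℝ) (hlam : 0 < lam)
    (hmu : 0 ≤ mu) (hmuα : mu < α₁) (hρ : Amenable lam mu ρ)
    (βhat : EuclideanSpace ℝ (Fin p)) (hβhatS : ∀ j, βhat j ≠ 0 → j ∈ S)
    (hβhat1 : norm1 βhat ≤ R)
    (zhat : Fin p → ℝ)
    (hzero : ∀ j, gradient L βhat j - qDeriv lam ρ (βhat j) + lam * zhat j = 0)
    (hzS : (fun j : {j // j ∈ S} => zhat j) ∈ l1Subdiff (fun j : {j // j ∈ S} => βhat j))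
    (hδ : 0 < δ) (hδ_ub : δ ≤ 1)
    (hdual : ∀ j ∉ S, |zhat j| ≤ 1 - δ)
    (hlam_ub : lam ≤ α₂ / (8 * R))
    (hsample₁ : 16 * R ^ 2 * τ₂ ^ 2 / α₂ ^ 2 * Real.log p ≤ n)
    (hlam_lb : 4 * R * τ₁ * Real.log p / (δ * n) ≤ lam)
    (hsample₂ : 2 * τ₁ / (α₁ - mu) * (4 / δ + 2) ^ 2 * (k * Real.log p) ≤ n) :
    ∀ βt : EuclideanSpace ℝ (Fin p), IsStationaryPt L ρ lam R βt →
      ∀ j, βt j ≠ 0 → j ∈ S := by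
  classical
  -- basic positivity facts
  have hn0 : (0:ℝ) < n := by exact_mod_cast hn
  have hβhat1nn : (0:ℝ) ≤ norm1 βhat := Finset.sum_nonneg fun j _ => abs_nonneg _
  have hR0 : 0 ≤ R := le_trans hβhat1nn hβhat1
  have hR : 0 < R := by
    rcases hR0.lt_or_eq with h | h
    · exact h
    · exfalso; rw [← h] at hlam_ub; simp at hlam_ub; linarith
  have hlogp : 0 < Real.log p := Real.log_pos (by exact_mod_cast hp)
  set c : ℝ := Real.log p / n with hcdef
  have hc0 : 0 < c := div_pos hlogp hn0
  have hαμ : 0 < α₁ - mu := by linarith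
  intro βt hstat j₀ hj₀ne
  by_contra hj₀S
  obtain ⟨hβt1, z, ⟨hz1, hz2⟩, hst⟩ := hstat
  set D : EuclideanSpace ℝ (Fin p) := βt - βhat with hDdef
  have hDj : ∀ j, D j = βt j - βhat j := fun j => rfl
  have hβhat0 : ∀ j, j ∉ S → βhat j = 0 := by
    intro j hj; by_contra h; exact hj (hβhatS j h)
  set qd : ℝ → ℝ := qDeriv lam ρ with hqddef
  set E : ℝ := ∑ j ∈ Sᶜ, |βt j| with hEdef
  have hE0 : 0 ≤ E := Finset.sum_nonneg fun j _ => abs_nonneg _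
  -- contradiction target setup at the end; first main chain
  -- key inequality from stationarity
  have hkey : ∑ j, (gradient L βt j - gradient L βhat j) * D j
      ≤ ∑ j, (qd (βt j) - qd (βhat j)) * D j - lam * ∑ j, (z j - zhat j) * D j := by
    have h1 := hst βhat hβhat1
    have h2 : ∑ j, (gradient L βhat j - qd (βhat j) + lam * zhat j) * (βhat j - βt j) = 0 :=
      Finset.sum_eq_zero fun j _ => by rw [hzero j]; ring
    have h3 : ∑ j, ((gradient L βt j - gradient L βhat j) * D j
        - (qd (βt j) - qd (βhat j)) * D j + lam * ((z j - zhat j) * D j))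
        = ∑ j, (-((gradient L βt j - qd (βt j) + lam * z j) * (βhat j - βt j))
          + (gradient L βhat j - qd (βhat j) + lam * zhat j) * (βhat j - βt j)) := by
      refine Finset.sum_congr rfl fun j _ => ?_
      rw [hDj]; ring
    rw [Finset.sum_add_distrib, Finset.sum_sub_distrib, Finset.sum_add_distrib,
      Finset.sum_neg_distrib, ← Finset.mul_sum] at h3
    rw [h2] at h3
    linarith only [h3, h1]
  -- bound on q'-difference term by mu * ||D||²-sum
  have hqmu : ∑ j, (qd (βt j) - qd (βhat j)) * D j ≤ mu * ∑ j, (D j) ^ 2 := by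
    rw [Finset.mul_sum]
    refine Finset.sum_le_sum fun j _ => ?_
    rw [hDj]
    exact hρ.qd_smooth hmu (βt j) (βhat j)
  -- bound on q'-difference term by 2 lam * norm1 D
  have hqlam : ∑ j, (qd (βt j) - qd (βhat j)) * D j ≤ 2 * lam * ∑ j, |D j| := by
    rw [Finset.mul_sum]
    refine Finset.sum_le_sum fun j _ => ?_
    have h1 : |qd (βt j) - qd (βhat j)| ≤ 2 * lam := by
      have ht1 := hρ.qd_abs hmu hlam.le (βt j)
      have ht2 := hρ.qd_abs hmu hlam.le (βhat j)
      rw [abs_le] at ht1 ht2 ⊢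
      constructor <;> linarith only [ht1.1, ht1.2, ht2.1, ht2.2]
    calc (qd (βt j) - qd (βhat j)) * D j ≤ |(qd (βt j) - qd (βhat j)) * D j| := le_abs_self _
      _ = |qd (βt j) - qd (βhat j)| * |D j| := abs_mul _ _
      _ ≤ 2 * lam * |D j| := mul_le_mul_of_nonneg_right h1 (abs_nonneg _)
  -- dual certificate bound
  have hzb : δ * E ≤ ∑ j, (z j - zhat j) * D j := by
    have split : ∀ f : Fin p → ℝ, ∑ j, f j = ∑ j ∈ S, f j + ∑ j ∈ Sᶜ, f j :=
      fun f => (Finset.sum_add_sum_compl S f).symm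
    have e2 : ∑ j, z j * βhat j ≤ ∑ j, |βhat j| := by
      refine Finset.sum_le_sum fun j _ => ?_
      calc z j * βhat j ≤ |z j * βhat j| := le_abs_self _
        _ = |z j| * |βhat j| := abs_mul _ _
        _ ≤ 1 * |βhat j| := mul_le_mul_of_nonneg_right (hz1 j) (abs_nonneg _)
        _ = |βhat j| := one_mul _
    have e3 : ∑ j, zhat j * βhat j = ∑ j, |βhat j| := by
      rw [split (fun j => zhat j * βhat j), split (fun j => |βhat j|)]
      have c1 : ∑ j ∈ Sᶜ, zhat j * βhat j = 0 :=
        Finset.sum_eq_zero fun j hj => by rw [hβhat0 j (Finset.mem_compl.mp hj), mul_zero]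
      have c2 : ∑ j ∈ Sᶜ, |βhat j| = 0 :=
        Finset.sum_eq_zero fun j hj => by rw [hβhat0 j (Finset.mem_compl.mp hj), abs_zero]
      have c3 : ∑ j ∈ S, zhat j * βhat j = ∑ j ∈ S, |βhat j| := by
        have h := hzS.2
        rwa [Finset.sum_coe_sort S (fun j => zhat j * βhat j),
          Finset.sum_coe_sort S (fun j => |βhat j|)] at h
      rw [c1, c2, c3]
    have e4 : ∑ j, zhat j * βt j ≤ ∑ j ∈ S, |βt j| + (1 - δ) * E := by
      rw [split (fun j => zhat j * βt j)]
      have c1 : ∑ j ∈ S, zhat j * βt j ≤ ∑ j ∈ S, |βt j| := by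
        refine Finset.sum_le_sum fun j hj => ?_
        have hzj : |zhat j| ≤ 1 := hzS.1 ⟨j, hj⟩
        calc zhat j * βt j ≤ |zhat j * βt j| := le_abs_self _
          _ = |zhat j| * |βt j| := abs_mul _ _
          _ ≤ 1 * |βt j| := mul_le_mul_of_nonneg_right hzj (abs_nonneg _)
          _ = |βt j| := one_mul _
      have c2 : ∑ j ∈ Sᶜ, zhat j * βt j ≤ (1 - δ) * E := by
        rw [hEdef, Finset.mul_sum]
        refine Finset.sum_le_sum fun j hj => ?_
        have hzj := hdual j (Finset.mem_compl.mp hj)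
        calc zhat j * βt j ≤ |zhat j * βt j| := le_abs_self _
          _ = |zhat j| * |βt j| := abs_mul _ _
          _ ≤ (1 - δ) * |βt j| := mul_le_mul_of_nonneg_right hzj (abs_nonneg _)
      linarith only [c1, c2]
    have e5 : ∑ j, (z j - zhat j) * D j
        = (∑ j, z j * βt j) - (∑ j, z j * βhat j) - ((∑ j, zhat j * βt j)
          - ∑ j, zhat j * βhat j) := by
      rw [← Finset.sum_sub_distrib, ← Finset.sum_sub_distrib, ← Finset.sum_sub_distrib]
      refine Finset.sum_congr rfl fun j _ => ?_
      rw [hDj]; ring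
    have e6 : ∑ j, |βt j| = ∑ j ∈ S, |βt j| + E := by rw [hEdef, split]
    rw [e5, hz2, e3, e6]
    linarith only [e2, e4]
  -- inner product identity
  have hip : ⟪gradient L (βhat + D) - gradient L βhat, D⟫
      = ∑ j, (gradient L βt j - gradient L βhat j) * D j := by
    have hadd : βhat + D = βt := by rw [hDdef]; abel
    rw [hadd]
    rw [PiLp.inner_apply]
    refine Finset.sum_congr rfl fun j _ => ?_
    simp [RCLike.inner_apply, mul_comm]
  -- norms
  have hnormsq : ‖D‖ ^ 2 = ∑ j, (D j) ^ 2 := by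
    rw [EuclideanSpace.norm_eq, Real.sq_sqrt (Finset.sum_nonneg fun j _ => by positivity)]
    exact Finset.sum_congr rfl fun j _ => by rw [Real.norm_eq_abs, sq_abs]
  have hN1eq : norm1 D = ∑ j, |D j| := rfl
  have hN1nn : 0 ≤ norm1 D := Finset.sum_nonneg fun j _ => abs_nonneg _
  have hN1 : norm1 D ≤ 2 * R := by
    have h1 : norm1 D ≤ norm1 βt + norm1 βhat := by
      rw [hN1eq, norm1, norm1, ← Finset.sum_add_distrib]
      exact Finset.sum_le_sum fun j _ => by rw [hDj]; exact abs_sub _ _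
    linarith only [h1, hβt1, hβhat1]
  -- step B : ‖D‖ ≤ 1
  have h8lamR : 8 * lam * R ≤ α₂ := by
    rw [le_div_iff₀ (by positivity)] at hlam_ub
    linarith
  have hsqrtbd : τ₂ * Real.sqrt c * norm1 D ≤ α₂ / 2 := by
    have hsq : τ₂ ^ 2 * c * (2 * R) ^ 2 ≤ (α₂ / 2) ^ 2 := by
      have h16 : 16 * R ^ 2 * τ₂ ^ 2 * Real.log p ≤ n * α₂ ^ 2 := by
        calc 16 * R ^ 2 * τ₂ ^ 2 * Real.log p
            = (16 * R ^ 2 * τ₂ ^ 2 / α₂ ^ 2 * Real.log p) * α₂ ^ 2 := by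
              field_simp
          _ ≤ n * α₂ ^ 2 := mul_le_mul_of_nonneg_right hsample₁ (by positivity)
      have heq : τ₂ ^ 2 * (Real.log p / n) * (2 * R) ^ 2
          = 4 * R ^ 2 * τ₂ ^ 2 * Real.log p / n := by ring
      rw [hcdef, heq, div_le_iff₀ hn0]
      nlinarith only [h16]
    have h2 : τ₂ * Real.sqrt c * norm1 D ≤ τ₂ * Real.sqrt c * (2 * R) :=
      mul_le_mul_of_nonneg_left hN1 (by positivity)
    have h3 : τ₂ * Real.sqrt c * (2 * R) ≤ α₂ / 2 := by
      have hx : 0 ≤ τ₂ * Real.sqrt c * (2 * R) := by positivity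
      have hxx : (τ₂ * Real.sqrt c * (2 * R)) ^ 2 = τ₂ ^ 2 * c * (2 * R) ^ 2 := by
        rw [mul_pow, mul_pow, Real.sq_sqrt hc0.le]
      calc τ₂ * Real.sqrt c * (2 * R)
          = Real.sqrt ((τ₂ * Real.sqrt c * (2 * R)) ^ 2) := (Real.sqrt_sq hx).symm
        _ ≤ Real.sqrt ((α₂ / 2) ^ 2) := Real.sqrt_le_sqrt (by rw [hxx]; exact hsq)
        _ = α₂ / 2 := Real.sqrt_sq (by positivity)
    linarith only [h2, h3]
  have hDle1 : ‖D‖ ≤ 1 := by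
    rcases le_or_gt ‖D‖ 1 with h | h
    · exact h
    exfalso
    have h2 := (hRSC βhat D).2 h.le
    rw [hip] at h2
    have h3 : lam * (δ * E) ≤ lam * ∑ j, (z j - zhat j) * D j :=
      mul_le_mul_of_nonneg_left hzb hlam.le
    have h4 : ∑ j, (gradient L βt j - gradient L βhat j) * D j ≤ 2 * lam * norm1 D := by
      rw [hN1eq]
      have hEnn : 0 ≤ lam * (δ * E) := by positivity
      linarith only [hkey, hqlam, h3, hEnn]
    have h5 : 2 * lam * norm1 D ≤ 4 * lam * R := by
      nlinarith only [hN1, hlam.le]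
    have h6 : α₂ * ‖D‖ ≤ α₂ := by
      rw [← hcdef] at h2
      linarith only [h2, h4, h5, hsqrtbd, h8lamR]
    nlinarith only [hα₂, h6, h]
  -- main RSC application
  have hRSC1 := (hRSC βhat D).1 hDle1
  rw [hip] at hRSC1
  have main : (α₁ - mu) * ‖D‖ ^ 2 + lam * (δ * E) ≤ τ₁ * c * (norm1 D) ^ 2 := by
    have h3 : lam * (δ * E) ≤ lam * ∑ j, (z j - zhat j) * D j :=
      mul_le_mul_of_nonneg_left hzb hlam.le
    rw [hnormsq]
    rw [hnormsq] at hRSC1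
    linarith only [hkey, hqmu, hRSC1, h3]
  -- lambda lower bound consequence
  have hr2 : τ₁ * c * (2 * R) ≤ δ * lam / 2 := by
    rw [div_le_iff₀ (by positivity)] at hlam_lb
    have heq : τ₁ * (Real.log p / n) * (2 * R) = τ₁ * Real.log p * (2 * R) / n := by ring
    rw [hcdef, heq, div_le_iff₀ hn0]
    nlinarith only [hlam_lb]
  -- cone condition: E ≤ sum over S of |D j|
  set DS : ℝ := ∑ j ∈ S, |D j| with hDSdef
  have hDSnn : 0 ≤ DS := Finset.sum_nonneg fun j _ => abs_nonneg _
  have hsplitD : norm1 D = DS + E := by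
    rw [hN1eq, ← Finset.sum_add_sum_compl S]
    congr 1
    refine Finset.sum_congr rfl fun j hj => ?_
    rw [hDj, hβhat0 j (Finset.mem_compl.mp hj), sub_zero]
  have hcone : E ≤ DS := by
    have h1 : τ₁ * c * (norm1 D) ^ 2 ≤ δ * lam / 2 * norm1 D := by
      have ha : τ₁ * c * (norm1 D) ^ 2 ≤ τ₁ * c * (2 * R) * norm1 D := by
        nlinarith only [hN1, mul_nonneg (mul_nonneg hτ₁ hc0.le) hN1nn]
      have hb : τ₁ * c * (2 * R) * norm1 D ≤ δ * lam / 2 * norm1 D :=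
        mul_le_mul_of_nonneg_right hr2 hN1nn
      linarith only [ha, hb]
    have h2 : 0 ≤ (α₁ - mu) * ‖D‖ ^ 2 := mul_nonneg hαμ.le (sq_nonneg _)
    have h9 : δ * lam / 2 * E ≤ δ * lam / 2 * DS := by
      have main' := main
      rw [hsplitD] at main' h1
      linarith only [main', h1, h2]
    exact le_of_mul_le_mul_left h9 (by positivity)
  have hcs : DS ^ 2 ≤ k * ‖D‖ ^ 2 := by
    have h1 : DS ^ 2 ≤ (S.card : ℝ) * ∑ j ∈ S, |D j| ^ 2 := by
      rw [hDSdef]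
      exact sq_sum_le_card_mul_sum_sq (s := S) (f := fun j => |D j|)
    have h2 : ∑ j ∈ S, |D j| ^ 2 ≤ ∑ j, (D j) ^ 2 := by
      refine le_trans (le_of_eq (Finset.sum_congr rfl fun j _ => sq_abs _)) ?_
      exact Finset.sum_le_sum_of_subset_of_nonneg (Finset.subset_univ S)
        fun j _ _ => sq_nonneg _
    rw [hS] at h1
    rw [hnormsq]
    have hknn : (0:ℝ) ≤ (k:ℝ) := Nat.cast_nonneg _
    have h3 : (k:ℝ) * ∑ j ∈ S, |D j| ^ 2 ≤ (k:ℝ) * ∑ j, (D j) ^ 2 :=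
      mul_le_mul_of_nonneg_left h2 hknn
    linarith only [h1, h3]
  have hr3 : τ₁ * c * (4 * k) ≤ (α₁ - mu) / 2 := by
    have h36 : (4:ℝ) ≤ (4 / δ + 2) ^ 2 := by
      have h4δ : (4:ℝ) ≤ 4 / δ := by rw [le_div_iff₀ hδ]; nlinarith only [hδ_ub, hδ]
      nlinarith only [h4δ]
    have keyA : 2 * τ₁ * (4 / δ + 2) ^ 2 * (k * Real.log p) ≤ (α₁ - mu) * n := by
      have hmm := mul_le_mul_of_nonneg_right hsample₂ hαμ.le
      calc 2 * τ₁ * (4 / δ + 2) ^ 2 * (k * Real.log p)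
          = (2 * τ₁ / (α₁ - mu) * (4 / δ + 2) ^ 2 * (k * Real.log p)) * (α₁ - mu) := by
            field_simp
        _ ≤ n * (α₁ - mu) := hmm
        _ = (α₁ - mu) * n := mul_comm _ _
    have keyB : 8 * τ₁ * (k * Real.log p) ≤ 2 * τ₁ * (4 / δ + 2) ^ 2 * (k * Real.log p) := by
      have h0 : (0:ℝ) ≤ 2 * τ₁ * (k * Real.log p) := by positivity
      nlinarith only [mul_le_mul_of_nonneg_left h36 h0]
    have heq : τ₁ * (Real.log p / n) * (4 * k) = 4 * τ₁ * (k * Real.log p) / n := by ring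
    rw [hcdef, heq, div_le_iff₀ hn0]
    nlinarith only [keyA, keyB]
  -- final contradiction machinery : E = 0
  have hEzero : E ≤ 0 := by
    have h1 : (norm1 D) ^ 2 ≤ 4 * (k * ‖D‖ ^ 2) := by
      rw [hsplitD]
      nlinarith only [hcs, hcone, hDSnn, hE0,
        mul_nonneg (sub_nonneg.mpr hcone) (by linarith : (0:ℝ) ≤ DS + E)]
    have h2 : τ₁ * c * (norm1 D) ^ 2 ≤ (α₁ - mu) / 2 * ‖D‖ ^ 2 := by
      calc τ₁ * c * (norm1 D) ^ 2 ≤ τ₁ * c * (4 * (k * ‖D‖ ^ 2)) :=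
            mul_le_mul_of_nonneg_left h1 (by positivity)
        _ = τ₁ * c * (4 * k) * ‖D‖ ^ 2 := by ring
        _ ≤ (α₁ - mu) / 2 * ‖D‖ ^ 2 := mul_le_mul_of_nonneg_right hr3 (sq_nonneg _)
    have h3 : lam * (δ * E) ≤ 0 := by
      nlinarith only [main, h2, mul_nonneg hαμ.le (sq_nonneg ‖D‖)]
    have h4 : lam * δ * E ≤ lam * δ * 0 := by nlinarith only [h3]
    exact le_of_mul_le_mul_left h4 (by positivity)
  have hEeq : E = 0 := le_antisymm hEzero hE0
  have hterm : |βt j₀| ≤ E := by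
    rw [hEdef]
    exact Finset.single_le_sum (fun j _ => abs_nonneg (βt j)) (Finset.mem_compl.mpr hj₀S)
  rw [hEeq] at hterm
  exact hj₀ne (abs_nonpos_iff.mp hterm)
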